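/- Let (Ω, ℱ, P) be a probability space carrying a filtration ℱ_0 ⊆ ℱ_1 ⊆ … ⊆ ℱ_m ⊆ ℱ. For 1 ≤ n ≤ m let U_n : Ω → {0,1} be ℱ_n-measurable and let A_n ∈ ℱ_{n−1}. Let p ∈ [0,1] and assume that for each n, P[U_n = 1 | ℱ_{n−1}] · 𝟙_{A_n} ≤ p almost surely. Then the random variable S = Σ_{n=1}^m U_n·𝟙_{A_n} is stochastically dominated by a Binomial(m, p) random variable; that is, for every integer j with 0 ≤ j ≤ m: P[S ≥ j] ≤ Σ_{i=j}^m C(m,i)·p^i·(1−p)^{m−i}, where C(m,i) is the binomial coefficient. -/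

import Mathlib

open MeasureTheory

private lemma bd_sum_shift (f : ℕ → ℝ) (a b : ℕ) :
    ∑ i ∈ Finset.Icc (a + 1) (b + 1), f i = ∑ i ∈ Finset.Icc a b, f (i + 1) := by
  rw [show Finset.Icc (a + 1) (b + 1) = (Finset.Icc a b).image (1 + ·) by
    rw [Finset.image_add_left_Icc]; congr 1 <;> omega]
  rw [Finset.sum_image (by intro x _ y _ h; simp only at h; omega)]
  exact Finset.sum_congr rfl fun i _ => by rw [Nat.add_comm 1 i]

private lemma bd_tail_zero (p : ℝ) (k : ℕ) :
    ∑ i ∈ Finset.Icc 0 k, (k.choose i : ℝ) * p ^ i * (1 - p) ^ (k - i) = 1 := by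
  have h : Finset.Icc 0 k = Finset.range (k + 1) := by
    ext x; simp [Nat.lt_succ_iff]
  calc ∑ i ∈ Finset.Icc 0 k, (k.choose i : ℝ) * p ^ i * (1 - p) ^ (k - i)
      = (p + (1 - p)) ^ k := by
        rw [add_pow, h]; exact Finset.sum_congr rfl fun i _ => by ring
    _ = 1 := by norm_num

private lemma bd_tail_rec (p : ℝ) (k j : ℕ) :
    ∑ i ∈ Finset.Icc (j + 1) (k + 1), ((k + 1).choose i : ℝ) * p ^ i * (1 - p) ^ (k + 1 - i)
      = (1 - p) * ∑ i ∈ Finset.Icc (j + 1) k, (k.choose i : ℝ) * p ^ i * (1 - p) ^ (k - i)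
        + p * ∑ i ∈ Finset.Icc j k, (k.choose i : ℝ) * p ^ i * (1 - p) ^ (k - i) := by
  rcases le_or_gt j k with hjk | hjk
  · have h2 : ∑ i ∈ Finset.Icc j k, (k.choose (i + 1) : ℝ) * p ^ (i + 1) * (1 - p) ^ (k - i)
        = (1 - p) * ∑ i ∈ Finset.Icc (j + 1) k, (k.choose i : ℝ) * p ^ i * (1 - p) ^ (k - i) := by
      have := bd_sum_shift (fun i => (k.choose i : ℝ) * p ^ i * (1 - p) ^ (k + 1 - i)) j k
      simp only [Nat.succ_sub_succ] at this
      rw [← this, Finset.sum_Icc_succ_top (by omega : j + 1 ≤ k + 1)]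
      simp only [Nat.choose_succ_self, Nat.cast_zero, zero_mul, add_zero]
      rw [Finset.mul_sum]
      refine Finset.sum_congr rfl fun i hi => ?_
      have hik : i ≤ k := (Finset.mem_Icc.mp hi).2
      rw [show k + 1 - i = (k - i) + 1 by omega]
      ring
    have h1 : ∑ i ∈ Finset.Icc (j + 1) (k + 1),
          ((k + 1).choose i : ℝ) * p ^ i * (1 - p) ^ (k + 1 - i)
        = ∑ i ∈ Finset.Icc j k,
            ((k.choose i : ℝ) * p ^ (i + 1) * (1 - p) ^ (k - i)
              + (k.choose (i + 1) : ℝ) * p ^ (i + 1) * (1 - p) ^ (k - i)) := by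
      rw [bd_sum_shift (fun i => ((k + 1).choose i : ℝ) * p ^ i * (1 - p) ^ (k + 1 - i)) j k]
      refine Finset.sum_congr rfl fun i _ => ?_
      simp only [Nat.succ_sub_succ, Nat.choose_succ_succ]
      push_cast
      ring
    rw [h1, Finset.sum_add_distrib, h2, add_comm]
    congr 1
    rw [Finset.mul_sum]
    exact Finset.sum_congr rfl fun i _ => by ring
  · rw [Finset.Icc_eq_empty (show ¬ j + 1 ≤ k + 1 by omega),
      Finset.Icc_eq_empty (show ¬ j + 1 ≤ k by omega),
      Finset.Icc_eq_empty (show ¬ j ≤ k by omega)]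
    simp

private lemma bd_key {Ω : Type*} {G m0 : MeasurableSpace Ω} (P : Measure Ω)
    [IsProbabilityMeasure P] (hG : G ≤ m0) {D C : Set Ω} (hD : MeasurableSet[G] D)
    (hC : MeasurableSet C) {p : ℝ}
    (hbd : ∀ᵐ ω ∂P, (P[C.indicator (fun _ => (1 : ℝ))|G]) ω ≤ p) :
    (P (D ∩ C)).toReal ≤ p * (P D).toReal := by
  have hint : Integrable (C.indicator (fun _ => (1 : ℝ))) P :=
    (integrable_const 1).indicator hC
  have h1 := setIntegral_condExp hG hint hD
  have h2 : ∫ x in D, C.indicator (fun _ => (1 : ℝ)) x ∂P = (P (D ∩ C)).toReal := by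
    rw [setIntegral_indicator hC]
    simp [Measure.real]
  have h3 : ∫ x in D, (P[C.indicator (fun _ => (1 : ℝ))|G]) x ∂P ≤ ∫ x in D, p ∂P :=
    setIntegral_mono_ae integrable_condExp.integrableOn (integrable_const p).integrableOn hbd
  rw [setIntegral_const, smul_eq_mul] at h3; simp only [Measure.real] at h3
  rw [← h2, ← h1]
  linarith [h3, mul_comm ((P D).toReal) p]

theorem binomial_domination
    {Ω : Type*} {m0 : MeasurableSpace Ω} (P : Measure Ω) [IsProbabilityMeasure P]
    (m : ℕ) (F : ℕ → MeasurableSpace Ω)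
    (hFmono : ∀ n, n < m → F n ≤ F (n + 1)) (hFle : ∀ n, n ≤ m → F n ≤ m0)
    (U : ℕ → Ω → ℝ) (hUmeas : ∀ n, 1 ≤ n → n ≤ m → Measurable[F n] (U n))
    (hU01 : ∀ n ω, U n ω = 0 ∨ U n ω = 1)
    (A : ℕ → Set Ω) (hA : ∀ n, 1 ≤ n → n ≤ m → MeasurableSet[F (n - 1)] (A n))
    (p : ℝ) (hp0 : 0 ≤ p) (hp1 : p ≤ 1)
    (hbound : ∀ n, 1 ≤ n → n ≤ m → ∀ᵐ ω ∂P,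
      (P[Set.indicator {ω' | U n ω' = 1} (fun _ => (1 : ℝ))|F (n - 1)]) ω *
        (A n).indicator (fun _ => (1 : ℝ)) ω ≤ p) :
    ∀ j ≤ m,
      P {ω | (j : ℝ) ≤ ∑ n ∈ Finset.Icc 1 m, U n ω * (A n).indicator (fun _ => (1 : ℝ)) ω} ≤
        ENNReal.ofReal
          (∑ i ∈ Finset.Icc j m, (m.choose i : ℝ) * p ^ i * (1 - p) ^ (m - i)) := by
  classical
  -- chain of σ-algebras
  have hFchain : ∀ a b : ℕ, a ≤ b → b ≤ m → F a ≤ F b := by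
    intro a b hab hbm
    induction b with
    | zero => obtain rfl : a = 0 := Nat.le_zero.mp hab; exact le_rfl
    | succ n ih =>
      rcases Nat.eq_or_lt_of_le hab with rfl | h
      · exact le_rfl
      · exact (ih (by omega) (by omega)).trans (hFmono n (by omega))
  set X : ℕ → Ω → ℝ := fun n ω => U n ω * (A n).indicator (fun _ => (1 : ℝ)) ω with hXdef
  have hX01 : ∀ n ω, X n ω = 0 ∨ X n ω = 1 := by
    intro n ω
    by_cases h : ω ∈ A n
    · rcases hU01 n ω with h0 | h1
      · left; simp [hXdef, h, h0]
      · right; simp [hXdef, h, h1]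
    · left; simp [hXdef, h]
  have hXmeas : ∀ n, 1 ≤ n → n ≤ m → Measurable[F n] (X n) := by
    intro n h1 h2
    have hAn : MeasurableSet[F n] (A n) :=
      (hFchain (n - 1) n (Nat.sub_le n 1) h2) _ (hA n h1 h2)
    exact (hUmeas n h1 h2).mul (measurable_const.indicator hAn)
  have hSmeas : ∀ k, k ≤ m → Measurable[F k] (fun ω => ∑ n ∈ Finset.Icc 1 k, X n ω) := by
    intro k hk
    apply Finset.measurable_sum
    intro n hn
    have hn' := Finset.mem_Icc.mp hn
    exact (hXmeas n hn'.1 (hn'.2.trans hk)).mono (hFchain n k hn'.2 hk) le_rfl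
  have main : ∀ k, k ≤ m → ∀ j : ℕ,
      P {ω | (j : ℝ) ≤ ∑ n ∈ Finset.Icc 1 k, X n ω} ≤
        ENNReal.ofReal
          (∑ i ∈ Finset.Icc j k, (k.choose i : ℝ) * p ^ i * (1 - p) ^ (k - i)) := by
    intro k
    induction k with
    | zero =>
      intro _ j
      rcases Nat.eq_zero_or_pos j with rfl | hj
      · calc P _ ≤ 1 := prob_le_one
          _ = ENNReal.ofReal
              (∑ i ∈ Finset.Icc 0 0, ((0 : ℕ).choose i : ℝ) * p ^ i * (1 - p) ^ (0 - i)) := by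
            rw [bd_tail_zero p 0]; simp
      · have hempty : {ω | (j : ℝ) ≤ ∑ n ∈ Finset.Icc 1 0, X n ω} = ∅ := by
          ext ω
          simp only [Set.mem_setOf_eq, Set.mem_empty_iff_false, iff_false, not_le]
          rw [show Finset.Icc 1 0 = (∅ : Finset ℕ) by rfl]
          simp only [Finset.sum_empty]
          exact_mod_cast Nat.cast_pos.mpr hj
        rw [hempty]
        simp
    | succ k ih =>
      intro hk1 j
      have hkm : k ≤ m := by omega
      rcases Nat.eq_zero_or_pos j with rfl | hj
      · calc P _ ≤ 1 := prob_le_one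
          _ = ENNReal.ofReal
              (∑ i ∈ Finset.Icc 0 (k + 1),
                ((k + 1).choose i : ℝ) * p ^ i * (1 - p) ^ (k + 1 - i)) := by
            rw [bd_tail_zero p (k + 1)]; simp
      · obtain ⟨j', rfl⟩ : ∃ j', j = j' + 1 := ⟨j - 1, by omega⟩
        set S : Ω → ℝ := fun ω => ∑ n ∈ Finset.Icc 1 k, X n ω with hSdef
        have hSFk : Measurable[F k] S := hSmeas k hkm
        set B1 : Set Ω := {ω | ((j' + 1 : ℕ) : ℝ) ≤ S ω} with hB1def
        set B0 : Set Ω := {ω | ((j' : ℕ) : ℝ) ≤ S ω} with hB0def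
        set C : Set Ω := {ω | X (k + 1) ω = 1} with hCdef
        have hB1Fk : MeasurableSet[F k] B1 := measurableSet_le measurable_const hSFk
        have hB0Fk : MeasurableSet[F k] B0 := measurableSet_le measurable_const hSFk
        have hB1m0 : MeasurableSet B1 := (hFle k hkm) _ hB1Fk
        have hB0m0 : MeasurableSet B0 := (hFle k hkm) _ hB0Fk
        have hXk1 : Measurable (X (k + 1)) :=
          (hXmeas (k + 1) (by omega) hk1).mono (hFle (k + 1) hk1) le_rfl
        have hCm0 : MeasurableSet C := measurableSet_eq_fun hXk1 measurable_const
        have hB1subB0 : B1 ⊆ B0 := by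
          intro ω hω
          simp only [hB1def, hB0def, Set.mem_setOf_eq] at hω ⊢
          push_cast at hω ⊢
          linarith
        -- inclusion
        have hsub : {ω | ((j' + 1 : ℕ) : ℝ) ≤ ∑ n ∈ Finset.Icc 1 (k + 1), X n ω} ⊆
            B1 ∪ ((B0 \ B1) ∩ C) := by
          intro ω hω
          simp only [Set.mem_setOf_eq] at hω
          rw [Finset.sum_Icc_succ_top (by omega : (1 : ℕ) ≤ k + 1)] at hω
          rcases hX01 (k + 1) ω with h0 | h1
          · left
            simp only [hB1def, Set.mem_setOf_eq]
            rw [h0] at hω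
            simpa using hω
          · by_cases hB : ω ∈ B1
            · left; exact hB
            · right
              refine ⟨⟨?_, hB⟩, h1⟩
              simp only [hB1def, Set.mem_setOf_eq, not_le] at hB
              simp only [hB0def, Set.mem_setOf_eq]
              rw [h1] at hω
              push_cast at hω ⊢
              linarith
        -- conditional bound for C
        have hbd : ∀ᵐ ω ∂P, (P[C.indicator (fun _ => (1 : ℝ))|F k]) ω ≤ p := by
          have hUm0 : Measurable (U (k + 1)) :=
            (hUmeas (k + 1) (by omega) hk1).mono (hFle (k + 1) hk1) le_rfl
          have hU1 : MeasurableSet {ω' | U (k + 1) ω' = 1} :=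
            measurableSet_eq_fun hUm0 measurable_const
          have hintU : Integrable ({ω' | U (k + 1) ω' = 1}.indicator (fun _ => (1 : ℝ))) P :=
            (integrable_const 1).indicator hU1
          have hAk : MeasurableSet[F k] (A (k + 1)) := hA (k + 1) (by omega) hk1
          have hCeq : C.indicator (fun _ => (1 : ℝ)) =
              (A (k + 1)).indicator ({ω' | U (k + 1) ω' = 1}.indicator (fun _ => (1 : ℝ))) := by
            funext ω
            by_cases hAω : ω ∈ A (k + 1)
            · rcases hU01 (k + 1) ω with h0 | h1
              · have : ω ∉ C := by simp [hCdef, hXdef, hAω, h0]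
                simp [this, hAω, Set.indicator_apply, h0]
              · have : ω ∈ C := by simp [hCdef, hXdef, hAω, h1]
                simp [this, hAω, Set.indicator_apply, h1]
            · have : ω ∉ C := by simp [hCdef, hXdef, hAω]
              simp [this, hAω, Set.indicator_apply]
          have hce := condExp_indicator (m := F k) (μ := P) hintU hAk
          have hbnd := hbound (k + 1) (by omega) hk1
          rw [hCeq]
          filter_upwards [hce, hbnd] with ω hω hω'
          rw [hω]
          simp only [Nat.add_sub_cancel] at hω'
          by_cases hAω : ω ∈ A (k + 1)
          · simpa [Set.indicator_of_mem hAω] using hω'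
          · simpa [Set.indicator_of_notMem hAω] using hp0
        have hkey : (P ((B0 \ B1) ∩ C)).toReal ≤ p * (P (B0 \ B1)).toReal :=
          bd_key P (hFle k hkm) (hB0Fk.diff hB1Fk) hCm0 hbd
        -- arithmetic
        set T1 : ℝ := ∑ i ∈ Finset.Icc (j' + 1) k, (k.choose i : ℝ) * p ^ i * (1 - p) ^ (k - i)
          with hT1def
        set T0 : ℝ := ∑ i ∈ Finset.Icc j' k, (k.choose i : ℝ) * p ^ i * (1 - p) ^ (k - i)
          with hT0def
        have hT1nn : 0 ≤ T1 := Finset.sum_nonneg fun i _ =>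
          mul_nonneg (mul_nonneg (Nat.cast_nonneg _) (pow_nonneg hp0 _)) (pow_nonneg (by linarith) _)
        have hT0nn : 0 ≤ T0 := Finset.sum_nonneg fun i _ =>
          mul_nonneg (mul_nonneg (Nat.cast_nonneg _) (pow_nonneg hp0 _)) (pow_nonneg (by linarith) _)
        have hb1 : (P B1).toReal ≤ T1 := by
          have := ih hkm (j' + 1)
          rw [← ENNReal.ofReal_toReal (measure_ne_top P B1)] at this
          exact (ENNReal.ofReal_le_ofReal_iff hT1nn).mp this
        have hb0 : (P B0).toReal ≤ T0 := by
          have := ih hkm j'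
          rw [← ENNReal.ofReal_toReal (measure_ne_top P B0)] at this
          exact (ENNReal.ofReal_le_ofReal_iff hT0nn).mp this
        have hdiff : (P (B0 \ B1)).toReal = (P B0).toReal - (P B1).toReal := by
          rw [measure_diff hB1subB0 hB1m0.nullMeasurableSet (measure_ne_top P B1)]
          rw [ENNReal.toReal_sub_of_le (measure_mono hB1subB0) (measure_ne_top P B0)]
        have hmain_real :
            (P {ω | ((j' + 1 : ℕ) : ℝ) ≤ ∑ n ∈ Finset.Icc 1 (k + 1), X n ω}).toReal ≤
              (P B1).toReal + (P ((B0 \ B1) ∩ C)).toReal := by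
          have h := (measure_mono hsub).trans (measure_union_le (μ := P) B1 ((B0 \ B1) ∩ C))
          calc (P {ω | ((j' + 1 : ℕ) : ℝ) ≤ ∑ n ∈ Finset.Icc 1 (k + 1), X n ω}).toReal
              ≤ (P B1 + P ((B0 \ B1) ∩ C)).toReal :=
                ENNReal.toReal_mono (by finiteness) h
            _ = (P B1).toReal + (P ((B0 \ B1) ∩ C)).toReal :=
                ENNReal.toReal_add (measure_ne_top _ _) (measure_ne_top _ _)
        have hfinal :
            (P {ω | ((j' + 1 : ℕ) : ℝ) ≤ ∑ n ∈ Finset.Icc 1 (k + 1), X n ω}).toReal ≤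
              ∑ i ∈ Finset.Icc (j' + 1) (k + 1),
                ((k + 1).choose i : ℝ) * p ^ i * (1 - p) ^ (k + 1 - i) := by
          rw [bd_tail_rec p k j']
          have hPB1nn : (0 : ℝ) ≤ (P B1).toReal := ENNReal.toReal_nonneg
          have hPB0b1 : (P B1).toReal ≤ (P B0).toReal :=
            ENNReal.toReal_mono (measure_ne_top P B0) (measure_mono hB1subB0)
          nlinarith [hmain_real, hkey, hdiff, hb1, hb0]
        rw [← ENNReal.ofReal_toReal
          (measure_ne_top P {ω | ((j' + 1 : ℕ) : ℝ) ≤ ∑ n ∈ Finset.Icc 1 (k + 1), X n ω})]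
        exact ENNReal.ofReal_le_ofReal hfinal
  intro j _
  exact main m le_rfl j
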